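/- Let K : ℕ → ℕ satisfy 1 ≤ K(n) and K(n) = O(log n). Set t_ε = ⌊50·(1 + (log n)/(2K(n)))·n/log log n⌋, p_n = (1 − 30/log log n)·2K(n)/n and r_n = ⌊t_ε + n·(log n)/(2K(n))⌋. Then n·Pr( Bin(r_n, p_n) ≤ (log n)^{0.8} ) → 0 as n → ∞. -/

import Mathlib

open Filter

/-- `Pr(Bin(N,q) ≤ a)`: the lower tail of a binomial random variable with `N` trials
and success probability `q`, up to the real threshold `a`. -/
noncomputable def binomLE (N : ℕ) (q a : ℝ) : ℝ :=
  ∑ k ∈ Finset.range (N + 1),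
    if (k : ℝ) ≤ a then (N.choose k : ℝ) * q ^ k * (1 - q) ^ (N - k) else 0

lemma binomLE_nonneg (N : ℕ) (q a : ℝ) (hq0 : 0 ≤ q) (hq1 : q ≤ 1) :
    0 ≤ binomLE N q a := by
  refine Finset.sum_nonneg fun k _ => ?_
  split
  · exact mul_nonneg (mul_nonneg (by positivity) (pow_nonneg hq0 _))
      (pow_nonneg (by linarith) _)
  · exact le_refl 0

lemma binomLE_le_bound (N : ℕ) (q a : ℝ) (hq0 : 0 ≤ q) (hq1 : q ≤ 1) (ha : 0 ≤ a) :
    binomLE N q a ≤ (a + 1) * (max ((N : ℝ) * q) 1) ^ a * Real.exp (q * a - q * N) := by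
  set M := max ((N : ℝ) * q) 1 with hM
  have hM1 : (1 : ℝ) ≤ M := le_max_right _ _
  have hM0 : (0 : ℝ) < M := lt_of_lt_of_le one_pos hM1
  have hB0 : 0 ≤ M ^ a * Real.exp (q * a - q * N) := by positivity
  rw [binomLE, ← Finset.sum_filter]
  have hterm : ∀ k ∈ (Finset.range (N + 1)).filter (fun k : ℕ => (k : ℝ) ≤ a),
      (N.choose k : ℝ) * q ^ k * (1 - q) ^ (N - k) ≤ M ^ a * Real.exp (q * a - q * N) := by
    intro k hk
    rw [Finset.mem_filter, Finset.mem_range] at hk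
    obtain ⟨hkN, hka⟩ := hk
    have hkN' : k ≤ N := Nat.lt_succ_iff.mp hkN
    have h1 : (N.choose k : ℝ) * q ^ k ≤ M ^ a := by
      calc (N.choose k : ℝ) * q ^ k ≤ ((N : ℝ) ^ k / k.factorial) * q ^ k := by
            exact mul_le_mul_of_nonneg_right (Nat.choose_le_pow_div k N) (pow_nonneg hq0 _)
        _ ≤ ((N : ℝ) * q) ^ k := by
            rw [div_mul_eq_mul_div, ← mul_pow]
            exact div_le_self (pow_nonneg (by positivity) _) (by exact_mod_cast k.factorial_pos)
        _ ≤ M ^ k := pow_le_pow_left₀ (by positivity) (le_max_left _ _) _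
        _ = M ^ ((k : ℕ) : ℝ) := (Real.rpow_natCast M k).symm
        _ ≤ M ^ a := Real.rpow_le_rpow_of_exponent_le hM1 hka
    have h2 : (1 - q) ^ (N - k) ≤ Real.exp (q * a - q * N) := by
      calc (1 - q) ^ (N - k) ≤ Real.exp (-q) ^ (N - k) := by
            apply pow_le_pow_left₀ (by linarith)
            linarith [Real.add_one_le_exp (-q)]
        _ = Real.exp (-q * (N - k : ℕ)) := by
            rw [← Real.exp_nat_mul]; ring_nf
        _ ≤ Real.exp (q * a - q * N) := by
            rw [Real.exp_le_exp, Nat.cast_sub hkN']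
            have : q * k ≤ q * a := mul_le_mul_of_nonneg_left hka hq0
            nlinarith
    exact mul_le_mul h1 h2 (pow_nonneg (by linarith) _) (by positivity)
  calc ∑ k ∈ (Finset.range (N + 1)).filter (fun k : ℕ => (k : ℝ) ≤ a),
        (N.choose k : ℝ) * q ^ k * (1 - q) ^ (N - k)
      ≤ ((Finset.range (N + 1)).filter (fun k : ℕ => (k : ℝ) ≤ a)).card •
          (M ^ a * Real.exp (q * a - q * N)) := Finset.sum_le_card_nsmul _ _ _ hterm
    _ ≤ (a + 1) * (M ^ a * Real.exp (q * a - q * N)) := by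
        rw [nsmul_eq_mul]
        apply mul_le_mul_of_nonneg_right _ hB0
        have hsub : (Finset.range (N + 1)).filter (fun k : ℕ => (k : ℝ) ≤ a) ⊆
            Finset.range (⌊a⌋₊ + 1) := by
          intro k hk
          rw [Finset.mem_filter] at hk
          exact Finset.mem_range.mpr (Nat.lt_succ_of_le (Nat.le_floor hk.2))
        calc (((Finset.range (N + 1)).filter (fun k : ℕ => (k : ℝ) ≤ a)).card : ℝ)
            ≤ ((Finset.range (⌊a⌋₊ + 1)).card : ℝ) := by
              exact_mod_cast Finset.card_le_card hsub
          _ = (⌊a⌋₊ : ℝ) + 1 := by rw [Finset.card_range]; push_cast; ring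
          _ ≤ a + 1 := by linarith [Nat.floor_le ha]
    _ = (a + 1) * M ^ a * Real.exp (q * a - q * N) := by ring

set_option maxHeartbeats 1000000 in
lemma key_estimate (n Kn : ℕ) (C : ℝ) (hC1 : 1 ≤ C) (hK1 : 1 ≤ Kn)
    (hKC : (Kn : ℝ) ≤ C * Real.log n)
    (h200 : Real.exp 200 ≤ Real.log n)
    (hC2 : C + 2 ≤ Real.log n)
    (hE3 : 2 * C * (Real.log n) ^ 2 ≤ n)
    (hE4 : (Real.log (Real.log n)) ^ 2 ≤ (Real.log n) ^ (0.2 : ℝ)) :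
    0 ≤ (n : ℝ) * binomLE
        ⌊(↑(⌊50 * (1 + Real.log n / (2 * Kn)) * n / Real.log (Real.log n)⌋₊) : ℝ)
          + n * Real.log n / (2 * Kn)⌋₊
        ((1 - 30 / Real.log (Real.log n)) * (2 * Kn) / n) ((Real.log n) ^ (0.8 : ℝ)) ∧
    (n : ℝ) * binomLE
        ⌊(↑(⌊50 * (1 + Real.log n / (2 * Kn)) * n / Real.log (Real.log n)⌋₊) : ℝ)
          + n * Real.log n / (2 * Kn)⌋₊
        ((1 - 30 / Real.log (Real.log n)) * (2 * Kn) / n) ((Real.log n) ^ (0.8 : ℝ))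
      ≤ Real.exp (-(Real.log n ^ (0.9 : ℝ))) := by
  set L : ℝ := Real.log n with hLdef
  set LL : ℝ := Real.log L with hLLdef
  set K' : ℝ := (Kn : ℝ) with hK'def
  clear_value L LL K'
  have hK'1 : (1 : ℝ) ≤ K' := by rw [hK'def]; exact_mod_cast hK1
  have hK'0 : (0 : ℝ) < K' := lt_of_lt_of_le one_pos hK'1
  have hLpos : (0 : ℝ) < L := lt_of_lt_of_le (Real.exp_pos 200) h200
  have hL201 : (201 : ℝ) ≤ L := le_trans (by linarith [Real.add_one_le_exp (200 : ℝ)]) h200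
  have hLL200 : (200 : ℝ) ≤ LL := by
    rw [hLLdef]
    have := Real.log_le_log (Real.exp_pos 200) h200
    rwa [Real.log_exp] at this
  have hLLpos : (0 : ℝ) < LL := by linarith
  have hnpos : (0 : ℝ) < n := by
    have h0 : (0 : ℝ) < 2 * C * L ^ 2 := by positivity
    linarith
  have hn0 : (n : ℝ) ≠ 0 := ne_of_gt hnpos
  set a : ℝ := L ^ (0.8 : ℝ) with hadef
  set q : ℝ := (1 - 30 / LL) * (2 * K') / n with hqdef
  set T : ℝ := 50 * (1 + L / (2 * K')) * n / LL with hTdef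
  set tε : ℕ := ⌊T⌋₊ with htedef
  set R : ℝ := (tε : ℝ) + n * L / (2 * K') with hRdef
  set r : ℕ := ⌊R⌋₊ with hrdef
  clear_value a q T tε R r
  set s : ℝ := 1 - 30 / LL with hsdef
  clear_value s
  have hs85 : (17 / 20 : ℝ) ≤ s := by
    have h30 : 30 / LL ≤ 30 / 200 := by gcongr
    rw [hsdef]
    linarith
  have hs0 : 0 ≤ s := by linarith
  have hs1 : s ≤ 1 := by
    have : 0 ≤ 30 / LL := by positivity
    rw [hsdef]; linarith
  have hq0 : 0 ≤ q := by
    rw [hqdef]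
    exact div_nonneg (mul_nonneg hs0 (by positivity)) hnpos.le
  have hKCL : 2 * K' ≤ 2 * C * L := by linarith
  have hL1 : (1 : ℝ) ≤ L := by linarith
  have hLsq : L ≤ L ^ 2 := le_self_pow₀ hL1 two_ne_zero
  have hCLsq : 2 * C * L ≤ 2 * C * L ^ 2 :=
    mul_le_mul_of_nonneg_left hLsq (by positivity)
  have h2Kn : 2 * K' / (n : ℝ) ≤ 1 := by
    rw [div_le_one hnpos]
    linarith
  have hq_le : q ≤ 2 * K' / n := by
    rw [hqdef]
    gcongr ?_ / (n : ℝ)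
    have := mul_le_mul_of_nonneg_right hs1 (by positivity : (0 : ℝ) ≤ 2 * K')
    linarith
  have hq1 : q ≤ 1 := le_trans hq_le h2Kn
  have ha0 : 0 ≤ a := by rw [hadef]; positivity
  have haL : a ≤ L := by
    rw [hadef]
    calc L ^ (0.8 : ℝ) ≤ L ^ (1 : ℝ) :=
        Real.rpow_le_rpow_of_exponent_le hL1 (by norm_num)
      _ = L := Real.rpow_one L
  have hqa : q * a ≤ 1 := by
    have h1 : q * a ≤ q * L := mul_le_mul_of_nonneg_left haL hq0
    have h2 : q * L ≤ (2 * K' / n) * L := mul_le_mul_of_nonneg_right hq_le hLpos.le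
    have h3 : (2 * K' / n) * L ≤ 1 := by
      rw [div_mul_eq_mul_div, div_le_one hnpos]
      have h4 : 2 * K' * L ≤ 2 * C * L * L := mul_le_mul_of_nonneg_right hKCL hLpos.le
      have h5 : 2 * C * L * L = 2 * C * L ^ 2 := by ring
      linarith
    linarith
  have hT0 : 0 ≤ T := by rw [hTdef]; positivity
  have htele : (tε : ℝ) ≤ T := by rw [htedef]; exact Nat.floor_le hT0
  have htege : T - 1 ≤ (tε : ℝ) := by rw [htedef]; exact (Nat.sub_one_lt_floor T).le
  have hR0 : 0 ≤ R := by rw [hRdef]; positivity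
  have hrle : (r : ℝ) ≤ R := by rw [hrdef]; exact Nat.floor_le hR0
  have hrge : R - 1 ≤ (r : ℝ) := by rw [hrdef]; exact (Nat.sub_one_lt_floor R).le
  have hqT : q * T = s * (100 * K' + 50 * L) / LL := by
    rw [hqdef, hTdef]
    field_simp
    ring
  have hqNL : q * ((n : ℝ) * L / (2 * K')) = s * L := by
    rw [hqdef]
    field_simp
  have hLLleL : LL ≤ L := by
    have := Real.log_le_sub_one_of_pos hLpos
    rw [← hLLdef] at this; linarith
  have hLdivLL : 1 ≤ L / LL := (one_le_div hLLpos).mpr hLLleL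
  have hqr_lb : L + 10 * (L / LL) ≤ q * r := by
    have h1 : T + (n : ℝ) * L / (2 * K') - 2 ≤ (r : ℝ) := by
      rw [hRdef] at hrge; linarith
    have h2 : q * (T + (n : ℝ) * L / (2 * K') - 2) ≤ q * r :=
      mul_le_mul_of_nonneg_left h1 hq0
    have h3 : q * (T + (n : ℝ) * L / (2 * K') - 2)
        = q * T + q * ((n : ℝ) * L / (2 * K')) - 2 * q := by ring
    have h4 : (85 / 2 : ℝ) * (L / LL) ≤ s * (100 * K' + 50 * L) / LL := by
      have h4a : (85 / 2 : ℝ) * L ≤ s * (100 * K' + 50 * L) := by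
        have := mul_le_mul_of_nonneg_right hs85 (by positivity : (0 : ℝ) ≤ 100 * K' + 50 * L)
        linarith [hK'0.le]
      calc (85 / 2 : ℝ) * (L / LL) = 85 / 2 * L / LL := by ring
        _ ≤ s * (100 * K' + 50 * L) / LL := by gcongr
    have h5 : s * L = L - 30 * (L / LL) := by rw [hsdef]; ring
    rw [hqT, hqNL] at h3
    linarith [hLdivLL, hq1, h2, h3, h4, h5]
  have hqr_ub : q * r ≤ (C + 2) * L := by
    have h1 : q * r ≤ q * (T + (n : ℝ) * L / (2 * K')) := by
      apply mul_le_mul_of_nonneg_left _ hq0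
      rw [hRdef] at hrle; linarith
    rw [mul_add, hqT, hqNL] at h1
    have h2 : s * (100 * K' + 50 * L) / LL ≤ (100 * K' + 50 * L) / 200 := by
      calc s * (100 * K' + 50 * L) / LL ≤ 1 * (100 * K' + 50 * L) / LL := by
            gcongr
        _ = (100 * K' + 50 * L) / LL := by rw [one_mul]
        _ ≤ (100 * K' + 50 * L) / 200 := by gcongr
    have h3 : s * L ≤ L := by
      have := mul_le_mul_of_nonneg_right hs1 hLpos.le
      linarith
    have hCL0 : 0 ≤ C * L := by positivity
    linarith [h1, h2, h3, hKC, hCL0, hLpos.le]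
  set M : ℝ := max ((r : ℝ) * q) 1 with hMdef
  clear_value M
  have hM1 : (1 : ℝ) ≤ M := hMdef ▸ le_max_right _ _
  have hM0 : (0 : ℝ) < M := lt_of_lt_of_le one_pos hM1
  have hM_ub : M ≤ (C + 2) * L := by
    rw [hMdef]
    apply max_le
    · rw [mul_comm]; exact hqr_ub
    · have : (3 : ℝ) * 201 ≤ (C + 2) * L :=
        mul_le_mul (by linarith) hL201 (by norm_num) (by linarith)
      linarith
  have hlogM : Real.log M ≤ 2 * LL := by
    have h1 : Real.log M ≤ Real.log ((C + 2) * L) := Real.log_le_log hM0 hM_ub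
    have h2 : Real.log ((C + 2) * L) = Real.log (C + 2) + Real.log L := by
      rw [Real.log_mul (by linarith) (ne_of_gt hLpos)]
    have h3 : Real.log (C + 2) ≤ LL := by
      rw [hLLdef]
      exact Real.log_le_log (by linarith) hC2
    rw [← hLLdef] at h2
    linarith
  have hMa : M ^ a ≤ Real.exp (2 * a * LL) := by
    rw [Real.rpow_def_of_pos hM0, Real.exp_le_exp]
    calc Real.log M * a ≤ 2 * LL * a := mul_le_mul_of_nonneg_right hlogM ha0
      _ = 2 * a * LL := by ring
  have hexp2LL : Real.exp (2 * LL) = L ^ 2 := by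
    rw [two_mul, Real.exp_add, hLLdef, Real.exp_log hLpos]; ring
  have ha1 : a + 1 ≤ Real.exp (2 * LL) := by
    rw [hexp2LL]; linarith [haL, hL201, sq_nonneg (L - 1)]
  have hn_exp : (n : ℝ) = Real.exp L := by
    rw [hLdef]; exact (Real.exp_log hnpos).symm
  have hX0 : 0 ≤ L ^ (0.1 : ℝ) := Real.rpow_nonneg hLpos.le _
  have hLL01 : LL ≤ L ^ (0.1 : ℝ) := by
    have hsq : (L ^ (0.1 : ℝ)) ^ 2 = L ^ (0.2 : ℝ) := by
      rw [← Real.rpow_natCast (L ^ (0.1 : ℝ)) 2, ← Real.rpow_mul hLpos.le]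
      norm_num
    by_contra hcon
    push_neg at hcon
    have hlt : (L ^ (0.1 : ℝ)) ^ 2 < LL ^ 2 := by
      apply pow_lt_pow_left₀ hcon hX0
      norm_num
    rw [hsq] at hlt
    linarith [hE4]
  have h09 : L ^ (0.8 : ℝ) * L ^ (0.1 : ℝ) = L ^ (0.9 : ℝ) := by
    rw [← Real.rpow_add hLpos]; norm_num
  have haLL : a * LL ≤ L ^ (0.9 : ℝ) := by
    calc a * LL ≤ a * L ^ (0.1 : ℝ) := mul_le_mul_of_nonneg_left hLL01 ha0
      _ = L ^ (0.9 : ℝ) := by rw [hadef, h09]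
  have h1L : (1 : ℝ) ≤ L ^ (0.9 : ℝ) := by
    calc (1 : ℝ) = 1 ^ (0.9 : ℝ) := (Real.one_rpow _).symm
      _ ≤ L ^ (0.9 : ℝ) := Real.rpow_le_rpow zero_le_one hL1 (by norm_num)
  have hLLle09 : LL ≤ L ^ (0.9 : ℝ) := by
    calc LL ≤ L ^ (0.1 : ℝ) := hLL01
      _ ≤ L ^ (0.9 : ℝ) := Real.rpow_le_rpow_of_exponent_le hL1 (by norm_num)
  have hLdiv09 : L ^ (0.9 : ℝ) ≤ L / LL := by
    have h1 : L / L ^ (0.1 : ℝ) ≤ L / LL := by gcongr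
    have h2 : L / L ^ (0.1 : ℝ) = L ^ (0.9 : ℝ) := by
      rw [show (0.9 : ℝ) = 1 - 0.1 by norm_num, Real.rpow_sub hLpos, Real.rpow_one]
    linarith
  constructor
  · exact mul_nonneg (Nat.cast_nonneg n) (binomLE_nonneg _ _ _ hq0 hq1)
  · calc (n : ℝ) * binomLE r q a
        ≤ (n : ℝ) * ((a + 1) * M ^ a * Real.exp (q * a - q * r)) := by
          apply mul_le_mul_of_nonneg_left _ (Nat.cast_nonneg n)
          rw [hMdef]
          exact binomLE_le_bound r q a hq0 hq1 ha0
      _ ≤ Real.exp L * (Real.exp (2 * LL) * Real.exp (2 * a * LL)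
            * Real.exp (1 - (L + 10 * (L / LL)))) := by
          rw [hn_exp]
          apply mul_le_mul_of_nonneg_left _ (Real.exp_pos L).le
          apply mul_le_mul
          · exact mul_le_mul ha1 hMa (Real.rpow_nonneg hM0.le _) (Real.exp_pos _).le
          · rw [Real.exp_le_exp]; linarith [hqa, hqr_lb]
          · exact (Real.exp_pos _).le
          · positivity
      _ ≤ Real.exp (-(L ^ (0.9 : ℝ))) := by
          rw [← Real.exp_add, ← Real.exp_add, ← Real.exp_add, Real.exp_le_exp]
          linarith [haLL, hLLle09, h1L, hLdiv09]

/-- Let `1 ≤ K n = O(log n)`,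
`t_ε = ⌊50·(1 + log n/(2 K n))·n/log log n⌋`,
`p_n = (1 − 30/log log n)·2 K n/n` and `r_n = ⌊t_ε + n·log n/(2 K n)⌋`.  Then
`n·Pr(Bin(r_n, p_n) ≤ (log n)^{0.8}) → 0` as `n → ∞`. -/
theorem phase_four_succeeds
    (K : ℕ → ℕ) (hK1 : ∀ n, 1 ≤ K n)
    (hKO : ∃ C : ℝ, ∀ᶠ n : ℕ in atTop, (K n : ℝ) ≤ C * Real.log n) :
    Tendsto
      (fun n : ℕ =>
        let tε : ℕ :=
          ⌊50 * (1 + Real.log n / (2 * K n)) * n / Real.log (Real.log n)⌋₊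
        let p : ℝ := (1 - 30 / Real.log (Real.log n)) * (2 * K n) / n
        let r : ℕ := ⌊(tε : ℝ) + n * Real.log n / (2 * K n)⌋₊
        (n : ℝ) * binomLE r p ((Real.log n) ^ (0.8 : ℝ)))
      atTop (nhds 0) := by
  obtain ⟨C₀, hC₀⟩ := hKO
  set C : ℝ := max C₀ 1 with hCdef
  have hC1 : (1 : ℝ) ≤ C := le_max_right _ _
  have hlog : Tendsto (fun n : ℕ => Real.log n) atTop atTop :=
    Real.tendsto_log_atTop.comp tendsto_natCast_atTop_atTop
  have hKC : ∀ᶠ n : ℕ in atTop, (K n : ℝ) ≤ C * Real.log n := by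
    filter_upwards [hC₀, hlog.eventually (eventually_ge_atTop 0)] with n h1 h2
    calc (K n : ℝ) ≤ C₀ * Real.log n := h1
      _ ≤ C * Real.log n := mul_le_mul_of_nonneg_right (le_max_left _ _) h2
  have h200 : ∀ᶠ n : ℕ in atTop, Real.exp 200 ≤ Real.log n :=
    hlog.eventually (eventually_ge_atTop _)
  have hC2 : ∀ᶠ n : ℕ in atTop, C + 2 ≤ Real.log n :=
    hlog.eventually (eventually_ge_atTop _)
  have hE3 : ∀ᶠ n : ℕ in atTop, 2 * C * (Real.log n) ^ 2 ≤ n := by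
    have hpos : (0 : ℝ) < (2 * C)⁻¹ := by positivity
    have h := (Real.isLittleO_pow_log_id_atTop (n := 2)).def hpos
    filter_upwards [tendsto_natCast_atTop_atTop.eventually h] with n h1
    simp only [id_eq, Real.norm_eq_abs] at h1
    rw [abs_of_nonneg (sq_nonneg _), abs_of_nonneg (Nat.cast_nonneg n)] at h1
    have h2C : (0 : ℝ) < 2 * C := by positivity
    rw [inv_mul_eq_div, le_div_iff₀ h2C] at h1
    linarith
  have hE4 : ∀ᶠ n : ℕ in atTop,
      (Real.log (Real.log n)) ^ 2 ≤ (Real.log n) ^ (0.2 : ℝ) := by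
    have h := (isLittleO_log_rpow_rpow_atTop 2
      (by norm_num : (0 : ℝ) < 0.2)).def one_pos
    filter_upwards [hlog.eventually h, hlog.eventually (eventually_ge_atTop 1)]
      with n h1 h2
    have hL0 : (0 : ℝ) ≤ Real.log n := by linarith
    have hLL0 : (0 : ℝ) ≤ Real.log (Real.log n) := Real.log_nonneg h2
    rw [Real.norm_eq_abs, Real.norm_eq_abs,
      abs_of_nonneg (Real.rpow_nonneg hLL0 _),
      abs_of_nonneg (Real.rpow_nonneg hL0 _), one_mul] at h1
    rw [show ((2 : ℝ)) = ((2 : ℕ) : ℝ) by norm_num, Real.rpow_natCast] at h1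
    exact h1
  have hupper : Tendsto (fun n : ℕ => Real.exp (-(Real.log n ^ (0.9 : ℝ))))
      atTop (nhds 0) := by
    have h1 : Tendsto (fun n : ℕ => (Real.log n) ^ (0.9 : ℝ)) atTop atTop :=
      (tendsto_rpow_atTop (by norm_num)).comp hlog
    exact Real.tendsto_exp_atBot.comp (tendsto_neg_atTop_atBot.comp h1)
  apply tendsto_of_tendsto_of_tendsto_of_le_of_le' tendsto_const_nhds hupper
  · filter_upwards [hKC, h200, hC2, hE3, hE4] with n h1 h2 h3 h4 h5
    exact (key_estimate n (K n) C hC1 (hK1 n) h1 h2 h3 h4 h5).1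
  · filter_upwards [hKC, h200, hC2, hE3, hE4] with n h1 h2 h3 h4 h5
    exact (key_estimate n (K n) C hC1 (hK1 n) h1 h2 h3 h4 h5).2
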